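/- arXiv:1212.4416 — 2 statements merged into one kernel-verified Lean document; each statement's English description precedes it below -/
import Mathlib

section
/- If g is continuous on [0,1] and f is defined by f(x) = g(x) + 2∫₀ˣ e^{2(x-y)} g(y) dy, then f satisfies the integral equation f(x) - 2∫₀ˣ f(y) dy = g(x) for all x ∈ [0,1]. -/
open Set intervalIntegral

theorem stmt1 (g f : ℝ → ℝ) (hg : ContinuousOn g (Icc 0 1))
    (hf : ∀ x ∈ Icc (0:ℝ) 1,
      f x = g x + 2 * ∫ y in (0:ℝ)..x, Real.exp (2 * (x - y)) * g y) :
    ∀ x ∈ Icc (0:ℝ) 1, f x - 2 * ∫ y in (0:ℝ)..x, f y = g x := by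
  set G : ℝ → ℝ := fun y => g (max 0 (min 1 y)) with hGdef
  have hGc : Continuous G := hg.comp_continuous (by fun_prop)
    (fun y => ⟨le_max_left _ _, max_le (by norm_num) (min_le_left _ _)⟩)
  have hGeq : ∀ y ∈ Icc (0:ℝ) 1, G y = g y := by
    intro y hy
    simp only [hGdef]
    rw [min_eq_right hy.2, max_eq_right hy.1]
  set I : ℝ → ℝ := fun y => ∫ t in (0:ℝ)..y, Real.exp (-2*t) * G t with hIdef
  have hIc : Continuous (fun t => Real.exp (-2*t) * G t) := by fun_prop
  have hId : ∀ y : ℝ, HasDerivAt I (Real.exp (-2*y) * G y) y := by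
    intro y
    exact intervalIntegral.integral_hasDerivAt_right (hIc.intervalIntegrable 0 y)
      (hIc.stronglyMeasurableAtFilter _ _) hIc.continuousAt
  set H : ℝ → ℝ := fun y => Real.exp (2*y) * I y with hHdef
  have hHd : ∀ y : ℝ, HasDerivAt H (G y + 2 * H y) y := by
    intro y
    have he : HasDerivAt (fun y : ℝ => Real.exp (2*y)) (Real.exp (2*y) * 2) y := by
      have := ((hasDerivAt_id y).const_mul 2).exp
      simpa using this
    have := he.mul (hId y)
    refine HasDerivAt.congr_deriv (f := H) this ?_
    have h1 : Real.exp (2*y) * Real.exp (-2*y) = 1 := by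
      rw [← Real.exp_add]; norm_num
    show _ = G y + 2 * (Real.exp (2*y) * I y)
    rw [← mul_assoc (Real.exp (2*y)), h1]; ring
  have hHc : Continuous H := continuous_iff_continuousAt.2 fun y => (hHd y).continuousAt
  have hfH : ∀ y ∈ Icc (0:ℝ) 1, f y = G y + 2 * H y := by
    intro y hy
    rw [hf y hy, hGeq y hy]
    congr 1
    congr 1
    have hcong : (∫ t in (0:ℝ)..y, Real.exp (2 * (y - t)) * g t)
        = ∫ t in (0:ℝ)..y, Real.exp (2*y) * (Real.exp (-2*t) * G t) := by
      apply intervalIntegral.integral_congr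
      intro t ht
      rw [uIcc_of_le hy.1] at ht
      have ht' : t ∈ Icc (0:ℝ) 1 := ⟨ht.1, ht.2.trans hy.2⟩
      show Real.exp (2 * (y - t)) * g t = Real.exp (2*y) * (Real.exp (-2*t) * G t)
      rw [hGeq t ht', ← mul_assoc, ← Real.exp_add]
      ring_nf
    rw [hcong, intervalIntegral.integral_const_mul]
  intro x hx
  have hintf : (∫ y in (0:ℝ)..x, f y) = ∫ y in (0:ℝ)..x, (G y + 2 * H y) := by
    apply intervalIntegral.integral_congr
    intro t ht
    rw [uIcc_of_le hx.1] at ht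
    exact hfH t ⟨ht.1, ht.2.trans hx.2⟩
  have hftc : (∫ y in (0:ℝ)..x, (G y + 2 * H y)) = H x - H 0 :=
    intervalIntegral.integral_eq_sub_of_hasDerivAt (fun t _ => hHd t)
      ((hGc.add (continuous_const.mul hHc)).intervalIntegrable 0 x)
  have hH0 : H 0 = 0 := by simp [hHdef, hIdef]
  rw [hfH x hx, hintf, hftc, hH0, hGeq x hx] at *
  ring
end

section
/- The sesquilinear form a(f,g) = ∫₀¹ f'(x)g'(x) dx + (𝒜 (f(0),f(1))ᵀ, (g(0),g(1))ᵀ) on H¹(0,1), with 𝒜 = [[−1,1],[1,−1]], satisfies: there exist ω ≥ 0 and α > 0 such that a(f,f) + ω‖f‖²_{L²} ≥ α‖f‖²_{H¹} for all f ∈ H¹(0,1). -/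
open Set intervalIntegral MeasureTheory

/-- Cauchy–Schwarz for interval integrals. -/
lemma cs_aux {a b : ℝ} (hab : a ≤ b) {g : ℝ → ℝ}
    (hg : IntervalIntegrable g volume a b)
    (hg2 : IntervalIntegrable (fun x => g x ^ 2) volume a b) :
    (∫ x in a..b, g x) ^ 2 ≤ (b - a) * ∫ x in a..b, g x ^ 2 := by
  rcases eq_or_lt_of_le hab with rfl | hlt
  · simp
  set I1 := ∫ x in a..b, g x with hI1
  set I2 := ∫ x in a..b, g x ^ 2 with hI2
  set m : ℝ := I1 / (b - a) with hm
  have hba : (0:ℝ) < b - a := by linarith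
  have h0 : 0 ≤ ∫ x in a..b, (g x - m) ^ 2 :=
    intervalIntegral.integral_nonneg hab (fun x _ => sq_nonneg _)
  have hexp : (∫ x in a..b, (g x - m) ^ 2)
      = I2 - (2 * m) * I1 + (b - a) * m ^ 2 := by
    have : (fun x => (g x - m) ^ 2)
        = fun x => (g x ^ 2 - (2 * m) * g x) + m ^ 2 := by
      funext x; ring
    rw [this, intervalIntegral.integral_add (hg2.sub (hg.const_mul _))
      intervalIntegrable_const, intervalIntegral.integral_sub hg2 (hg.const_mul _),
      intervalIntegral.integral_const_mul, intervalIntegral.integral_const]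
    simp [smul_eq_mul]
    rfl
  have hmm : m * (b - a) = I1 := div_mul_cancel₀ _ hba.ne'
  rw [hexp] at h0
  nlinarith [mul_nonneg hba.le h0]

/-- existence of a point below the mean. -/
lemma min_aux {a b : ℝ} (hab : a < b) {h : ℝ → ℝ}
    (hc : ContinuousOn h (Icc a b)) :
    ∃ x₀ ∈ Icc a b, (b - a) * h x₀ ≤ ∫ x in a..b, h x := by
  obtain ⟨x₀, hx₀, hmin⟩ := isCompact_Icc.exists_isMinOn (nonempty_Icc.2 hab.le) hc
  refine ⟨x₀, hx₀, ?_⟩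
  have hint : IntervalIntegrable h volume a b := by
    rw [← uIcc_of_le hab.le] at hc
    exact hc.intervalIntegrable
  calc (b - a) * h x₀ = ∫ _ in a..b, h x₀ := by
        rw [intervalIntegral.integral_const, smul_eq_mul]
    _ ≤ ∫ x in a..b, h x :=
        intervalIntegral.integral_mono_on hab.le intervalIntegrable_const hint
          (fun x hx => hmin hx)

set_option maxHeartbeats 1000000 in
theorem stmt18 :
    ∃ ω : ℝ, 0 ≤ ω ∧ ∃ α : ℝ, 0 < α ∧
      ∀ f f' : ℝ → ℝ,
        IntervalIntegrable f' volume 0 1 →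
        IntervalIntegrable (fun x => (f' x) ^ 2) volume 0 1 →
        (∀ x ∈ Icc (0:ℝ) 1, f x = f 0 + ∫ t in (0:ℝ)..x, f' t) →
        (∫ x in (0:ℝ)..1, (f' x) ^ 2)
            + dotProduct ((!![(-1:ℝ), 1; 1, -1]).mulVec ![f 0, f 1]) ![f 0, f 1]
            + ω * ∫ x in (0:ℝ)..1, (f x) ^ 2
          ≥ α * ((∫ x in (0:ℝ)..1, (f x) ^ 2) + ∫ x in (0:ℝ)..1, (f' x) ^ 2) := by
  refine ⟨145, by norm_num, 1/2, by norm_num, ?_⟩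
  intro f f' hf' hf'2 hrep
  -- continuity of f on [0,1]
  have h01 : (0:ℝ) ≤ 1 := by norm_num
  have hfc : ContinuousOn f (Icc (0:ℝ) 1) := by
    have hF : ContinuousOn (fun x => f 0 + ∫ t in (0:ℝ)..x, f' t) (Icc (0:ℝ) 1) := by
      have := (intervalIntegral.continuousOn_primitive_interval'
        (μ := volume) (b₁ := (0:ℝ)) (b₂ := 1) hf' (by rw [uIcc_of_le h01]; exact left_mem_Icc.2 h01))
      rw [uIcc_of_le h01] at this
      exact continuousOn_const.add this
    exact hF.congr hrep
  have hf2 : IntervalIntegrable (fun x => f x ^ 2) volume 0 1 := by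
    rw [← uIcc_of_le h01] at hfc
    exact (hfc.pow 2).intervalIntegrable
  set I0 := ∫ x in (0:ℝ)..1, (f x) ^ 2 with hI0def
  set I1 := ∫ x in (0:ℝ)..1, (f' x) ^ 2 with hI1def
  have hI0nn : 0 ≤ I0 := intervalIntegral.integral_nonneg h01 (fun x _ => sq_nonneg _)
  have hI1nn : 0 ≤ I1 := intervalIntegral.integral_nonneg h01 (fun x _ => sq_nonneg _)
  have hf2ae : 0 ≤ᵐ[volume.restrict (Ioc (0:ℝ) 1)] fun x => f x ^ 2 :=
    Filter.Eventually.of_forall (fun x => sq_nonneg _)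
  have hf'2ae : 0 ≤ᵐ[volume.restrict (Ioc (0:ℝ) 1)] fun x => f' x ^ 2 :=
    Filter.Eventually.of_forall (fun x => sq_nonneg _)
  -- pick x₀ ∈ [0, 1/12] with small f², and x₁ ∈ [11/12, 1]
  obtain ⟨x₀, hx₀mem, hx₀⟩ := min_aux (a := (0:ℝ)) (b := 1/12) (by norm_num)
    ((hfc.mono (Icc_subset_Icc le_rfl (by norm_num))).pow 2)
  obtain ⟨x₁, hx₁mem, hx₁⟩ := min_aux (a := (11/12:ℝ)) (b := 1) (by norm_num)
    ((hfc.mono (Icc_subset_Icc (by norm_num) le_rfl)).pow 2)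
  have hx₀01 : x₀ ∈ Icc (0:ℝ) 1 := ⟨hx₀mem.1, hx₀mem.2.trans (by norm_num)⟩
  have hx₁01 : x₁ ∈ Icc (0:ℝ) 1 := ⟨le_trans (by norm_num) hx₁mem.1, hx₁mem.2⟩
  -- f(x₀)² ≤ 12 I0 and f(x₁)² ≤ 12 I0
  have hsub0 : (∫ x in (0:ℝ)..(1/12:ℝ), f x ^ 2) ≤ I0 :=
    intervalIntegral.integral_mono_interval le_rfl (by norm_num) (by norm_num) hf2ae hf2
  have hsub1 : (∫ x in (11/12:ℝ)..(1:ℝ), f x ^ 2) ≤ I0 :=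
    intervalIntegral.integral_mono_interval (by norm_num) (by norm_num) le_rfl hf2ae hf2
  have hb0 : f x₀ ^ 2 ≤ 12 * I0 := by
    have := hx₀.trans hsub0; norm_num at this ⊢; linarith
  have hb1 : f x₁ ^ 2 ≤ 12 * I0 := by
    have := hx₁.trans hsub1; norm_num at this ⊢; linarith
  -- integrals of f' on subintervals
  have hf'A : IntervalIntegrable f' volume 0 x₀ := hf'.mono_set (by
    rw [uIcc_of_le hx₀mem.1, uIcc_of_le h01]; exact Icc_subset_Icc le_rfl hx₀01.2)
  have hf'2A : IntervalIntegrable (fun x => f' x ^ 2) volume 0 x₀ := hf'2.mono_set (by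
    rw [uIcc_of_le hx₀mem.1, uIcc_of_le h01]; exact Icc_subset_Icc le_rfl hx₀01.2)
  have hx01le : x₀ ≤ x₁ := le_trans (hx₀mem.2.trans (by norm_num)) hx₁mem.1
  have hf'C : IntervalIntegrable f' volume x₁ 1 := hf'.mono_set (by
    rw [uIcc_of_le hx₁01.2, uIcc_of_le h01]; exact Icc_subset_Icc hx₁01.1 le_rfl)
  have hf'2C : IntervalIntegrable (fun x => f' x ^ 2) volume x₁ 1 := hf'2.mono_set (by
    rw [uIcc_of_le hx₁01.2, uIcc_of_le h01]; exact Icc_subset_Icc hx₁01.1 le_rfl)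
  set A := ∫ t in (0:ℝ)..x₀, f' t with hA
  set C := ∫ t in x₁..(1:ℝ), f' t with hC
  -- Cauchy–Schwarz bounds
  have hJ0 : (∫ x in (0:ℝ)..x₀, f' x ^ 2) ≤ I1 :=
    intervalIntegral.integral_mono_interval le_rfl hx₀mem.1 hx₀01.2 hf'2ae hf'2
  have hJ0nn : 0 ≤ ∫ x in (0:ℝ)..x₀, f' x ^ 2 :=
    intervalIntegral.integral_nonneg hx₀mem.1 (fun x _ => sq_nonneg _)
  have hJ1 : (∫ x in x₁..(1:ℝ), f' x ^ 2) ≤ I1 :=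
    intervalIntegral.integral_mono_interval hx₁01.1 hx₁01.2 le_rfl hf'2ae hf'2
  have hJ1nn : 0 ≤ ∫ x in x₁..(1:ℝ), f' x ^ 2 :=
    intervalIntegral.integral_nonneg hx₁01.2 (fun x _ => sq_nonneg _)
  have hAcs : A ^ 2 ≤ x₀ * ∫ x in (0:ℝ)..x₀, f' x ^ 2 := by
    simpa using cs_aux hx₀mem.1 hf'A hf'2A
  have hCcs : C ^ 2 ≤ (1 - x₁) * ∫ x in x₁..(1:ℝ), f' x ^ 2 := cs_aux hx₁01.2 hf'C hf'2C
  have hA2 : A ^ 2 ≤ (1/12) * I1 := by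
    refine hAcs.trans ?_
    exact mul_le_mul (hx₀mem.2) hJ0 hJ0nn (by norm_num)
  have hC2 : C ^ 2 ≤ (1/12) * I1 := by
    refine hCcs.trans ?_
    exact mul_le_mul (by linarith [hx₁mem.1]) hJ1 hJ1nn (by norm_num)
  -- decomposition of f 1 - f 0
  have hrep0 : f x₀ = f 0 + A := hrep x₀ hx₀01
  have hrep1' : f x₁ = f 0 + ∫ t in (0:ℝ)..x₁, f' t := hrep x₁ hx₁01
  have hrepone : f 1 = f 0 + ∫ t in (0:ℝ)..(1:ℝ), f' t := hrep 1 (right_mem_Icc.2 h01)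
  have hsplit : (∫ t in (0:ℝ)..(1:ℝ), f' t) = (∫ t in (0:ℝ)..x₁, f' t) + C := by
    rw [hC]
    exact (intervalIntegral.integral_add_adjacent_intervals
      (hf'.mono_set (by rw [uIcc_of_le hx₁01.1, uIcc_of_le h01]; exact Icc_subset_Icc le_rfl hx₁01.2))
      hf'C).symm
  have hdiff : f 1 - f 0 = (f x₁ - f x₀) + A + C := by
    rw [hrepone, hsplit, hrep1', hrep0]; ring
  -- bound on the boundary term
  have hB2 : (f x₁ - f x₀) ^ 2 ≤ 48 * I0 := by nlinarith [hb0, hb1]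
  have hbd : (f 1 - f 0) ^ 2 ≤ (1/2) * I1 + 144 * I0 := by
    rw [hdiff]
    have key : ((f x₁ - f x₀) + A + C) ^ 2
        ≤ 3 * (f x₁ - f x₀) ^ 2 + 3 * A ^ 2 + 3 * C ^ 2 := by
      nlinarith [sq_nonneg ((f x₁ - f x₀) - A), sq_nonneg ((f x₁ - f x₀) - C), sq_nonneg (A - C)]
    linarith
  -- conclude
  have hdot : dotProduct ((!![(-1:ℝ), 1; 1, -1]).mulVec ![f 0, f 1]) ![f 0, f 1]
      = -(f 1 - f 0) ^ 2 := by
    simp [dotProduct, Matrix.mulVec, Fin.sum_univ_two]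
    ring
  rw [hdot]
  linarith [hbd, hI0nn, hI1nn]
end
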